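/- Let g11, g12, g22 : ℝ² → ℝ be twice continuously differentiable on an open rectangle D = I × J, forming the symmetric metric matrix G(u,v) = [[g11, g12],[g12, g22]]. Assume that for every center M ∈ D and every offset δ = (α, β) such that the corresponding closed rectangle lies in D, the energies of the two diagonals are equal: ∫_{-1}^{1} ḋ1(t)ᵀ G(d1(t)) ḋ1(t) dt = ∫_{-1}^{1} ḋ2(t)ᵀ G(d2(t)) ḋ2(t) dt, where d1(t) = M + t(α,β) and d2(t) = M + t(−α,β). Then g12 ≡ 0 on D and there exist functions U1, U2 : I → ℝ and V1, V2 : J → ℝ such that g11(u, v) = U1(u) + V1(v) and g22(u, v) = U2(u) + V2(v) on D; that is, the line element is an orthogonal Liouville line element ds² = (U1(u)+V1(v))du² + (U2(u)+V2(v))dv². -/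

import Mathlib

open MeasureTheory intervalIntegral Set Filter Topology

private lemma mem_icc_line {u0 c t : ℝ} (ht : |t| ≤ 1) :
    u0 + t * c ∈ Set.Icc (u0 - |c|) (u0 + |c|) := by
  have h1 : |t * c| ≤ |c| := by
    rw [abs_mul]; nlinarith [abs_nonneg c, abs_nonneg t]
  have h2 := abs_le.mp h1
  exact ⟨by linarith [h2.1], by linarith [h2.2]⟩

private lemma mem_icc_line' {u0 c t : ℝ} (ht : |t| ≤ 1) :
    u0 - t * c ∈ Set.Icc (u0 - |c|) (u0 + |c|) := by
  have h1 : |t * c| ≤ |c| := by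
    rw [abs_mul]; nlinarith [abs_nonneg c, abs_nonneg t]
  have h2 := abs_le.mp h1
  exact ⟨by linarith [h2.1], by linarith [h2.2]⟩

private lemma integral_eq_zero_of_lim {F : ℝ → ℝ → ℝ} {f : ℝ → ℝ} {B : ℝ}
    (hzero : ∀ᶠ ε in 𝓝[>] (0:ℝ), (∫ t in (-1:ℝ)..1, F ε t) = 0)
    (hmeas : ∀ᶠ ε in 𝓝[>] (0:ℝ), ContinuousOn (F ε) (Set.Icc (-1:ℝ) 1))
    (hbound : ∀ᶠ ε in 𝓝[>] (0:ℝ), ∀ t ∈ Set.Icc (-1:ℝ) 1, |F ε t| ≤ B)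
    (hlim : ∀ t ∈ Set.Icc (-1:ℝ) 1, Tendsto (fun ε => F ε t) (𝓝[>] (0:ℝ)) (𝓝 (f t))) :
    (∫ t in (-1:ℝ)..1, f t) = 0 := by
  have hsub : Set.uIoc (-1:ℝ) 1 ⊆ Set.Icc (-1:ℝ) 1 := by
    rw [Set.uIoc_of_le (by norm_num : (-1:ℝ) ≤ 1)]
    exact Set.Ioc_subset_Icc_self
  have h1 : Tendsto (fun ε => ∫ t in (-1:ℝ)..1, F ε t) (𝓝[>] (0:ℝ))
      (𝓝 (∫ t in (-1:ℝ)..1, f t)) := by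
    apply intervalIntegral.tendsto_integral_filter_of_dominated_convergence (fun _ => B)
    · exact hmeas.mono fun ε hc => (hc.mono hsub).aestronglyMeasurable measurableSet_uIoc
    · exact hbound.mono fun ε hb => MeasureTheory.ae_of_all _ fun t ht => by
        rw [Real.norm_eq_abs]; exact hb t (hsub ht)
    · exact intervalIntegrable_const
    · exact MeasureTheory.ae_of_all _ fun t ht => hlim t (hsub ht)
  have h2 : Tendsto (fun ε => ∫ t in (-1:ℝ)..1, F ε t) (𝓝[>] (0:ℝ)) (𝓝 0) :=
    Tendsto.congr' (hzero.mono fun ε h => h.symm) tendsto_const_nhds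
  exact tendsto_nhds_unique h1 h2

private lemma hasDerivAt_comp_line {g : ℝ × ℝ → ℝ} {q : ℝ × ℝ}
    (hd : DifferentiableAt ℝ g q) {φ ψ : ℝ → ℝ} {c d : ℝ}
    (hφ : HasDerivAt φ c 0) (hψ : HasDerivAt ψ d 0) (h0 : (φ 0, ψ 0) = q) :
    HasDerivAt (fun ε => g (φ ε, ψ ε)) (fderiv ℝ g q (c, d)) 0 := by
  have hf : HasFDerivAt g (fderiv ℝ g q) ((fun ε => (φ ε, ψ ε)) 0) := by
    rw [show (fun ε => (φ ε, ψ ε)) 0 = q from h0]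
    exact hd.hasFDerivAt
  exact hf.comp_hasDerivAt 0 (hφ.prodMk hψ)

private lemma fderiv_dir_smul {g : ℝ × ℝ → ℝ} (q : ℝ × ℝ) (s : ℝ) :
    fderiv ℝ g q (0, s) = s * fderiv ℝ g q (0, 1) := by
  have h : ((0:ℝ), s) = s • ((0:ℝ), (1:ℝ)) := by simp
  rw [h, _root_.map_smul, smul_eq_mul]

private lemma slice_hasDerivAt_snd {g : ℝ × ℝ → ℝ} {D : Set (ℝ × ℝ)} (hDo : IsOpen D)
    (hg : ContDiffOn ℝ 1 g D) {u y : ℝ} (h : (u, y) ∈ D) :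
    HasDerivAt (fun w => g (u, w)) (fderiv ℝ g (u, y) (0, 1)) y := by
  have hd := ((hg.differentiableOn one_ne_zero).differentiableAt (hDo.mem_nhds h)).hasFDerivAt
  exact hd.comp_hasDerivAt y ((hasDerivAt_const y u).prodMk (hasDerivAt_id y))

private lemma slice_hasDerivAt_fst {g : ℝ × ℝ → ℝ} {D : Set (ℝ × ℝ)} (hDo : IsOpen D)
    (hg : ContDiffOn ℝ 1 g D) {x y : ℝ} (h : (x, y) ∈ D) :
    HasDerivAt (fun w => g (w, y)) (fderiv ℝ g (x, y) (1, 0)) x := by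
  have hd := ((hg.differentiableOn one_ne_zero).differentiableAt (hDo.mem_nhds h)).hasFDerivAt
  exact hd.comp_hasDerivAt x ((hasDerivAt_id x).prodMk (hasDerivAt_const x y))

private lemma fderiv_swap_apply {g : ℝ × ℝ → ℝ} {x u : ℝ} (hd : DifferentiableAt ℝ g (u, x)) :
    fderiv ℝ (fun p : ℝ × ℝ => g (p.2, p.1)) (x, u) (0, 1) = fderiv ℝ g (u, x) (1, 0) := by
  have hsw : HasFDerivAt (fun p : ℝ × ℝ => ((p.2 : ℝ), (p.1 : ℝ)))
      ((ContinuousLinearMap.snd ℝ ℝ ℝ).prod (ContinuousLinearMap.fst ℝ ℝ ℝ)) (x, u) :=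
    ((ContinuousLinearMap.snd ℝ ℝ ℝ).prod (ContinuousLinearMap.fst ℝ ℝ ℝ)).hasFDerivAt
  have h : HasFDerivAt (fun p : ℝ × ℝ => g (p.2, p.1))
      ((fderiv ℝ g (u, x)).comp
        ((ContinuousLinearMap.snd ℝ ℝ ℝ).prod (ContinuousLinearMap.fst ℝ ℝ ℝ))) (x, u) :=
    hd.hasFDerivAt.comp (x, u) hsw
  rw [h.fderiv]
  rfl

section
variable {pmin pmax qmin qmax : ℝ} {A B : ℝ × ℝ → ℝ}

private lemma moment_aux
    (hA : ContDiffOn ℝ 1 A (Set.Ioo pmin pmax ×ˢ Set.Ioo qmin qmax))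
    (hB : ContinuousOn B (Set.Ioo pmin pmax ×ˢ Set.Ioo qmin qmax))
    (hid : ∀ u0 v0 α β : ℝ,
      Set.Icc (u0 - |α|) (u0 + |α|) ⊆ Set.Ioo pmin pmax →
      Set.Icc (v0 - |β|) (v0 + |β|) ⊆ Set.Ioo qmin qmax →
      (∫ t in (-1:ℝ)..1,
        (α ^ 2 * (A (u0 + t * α, v0 + t * β) - A (u0 + t * α, v0 - t * β)) +
         β ^ 2 * (B (u0 + t * α, v0 + t * β) - B (u0 + t * α, v0 - t * β)))) = 0)
    {v0 : ℝ} (hv0 : v0 ∈ Set.Ioo qmin qmax) {u0 a : ℝ} (ha : a ≠ 0)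
    (hIa : Set.Icc (u0 - |a|) (u0 + |a|) ⊆ Set.Ioo pmin pmax) :
    (∫ t in (-1:ℝ)..1, t * fderiv ℝ A (u0 + t * a, v0) (0, 1)) = 0 := by
  have hDo : IsOpen (Set.Ioo pmin pmax ×ˢ Set.Ioo qmin qmax) := isOpen_Ioo.prod isOpen_Ioo
  have hAc : ContinuousOn A (Set.Ioo pmin pmax ×ˢ Set.Ioo qmin qmax) := hA.continuousOn
  have hAd : ∀ p ∈ Set.Ioo pmin pmax ×ˢ Set.Ioo qmin qmax, DifferentiableAt ℝ A p :=
    fun p hp => (hA.differentiableOn one_ne_zero).differentiableAt (hDo.mem_nhds hp)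
  have hAf : ContinuousOn (fderiv ℝ A) (Set.Ioo pmin pmax ×ˢ Set.Ioo qmin qmax) :=
    hA.continuousOn_fderiv_of_isOpen hDo le_rfl
  obtain ⟨δ, hδpos, hδJ⟩ : ∃ δ > 0, Set.Icc (v0 - δ) (v0 + δ) ⊆ Set.Ioo qmin qmax := by
    refine ⟨min (v0 - qmin) (qmax - v0) / 2, by
      have h1 := hv0.1; have h2 := hv0.2
      have : 0 < min (v0 - qmin) (qmax - v0) := lt_min (by linarith) (by linarith)
      linarith, fun s hs => ?_⟩
    have h1 : min (v0 - qmin) (qmax - v0) / 2 ≤ (v0 - qmin) / 2 := by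
      have := min_le_left (v0 - qmin) (qmax - v0); linarith
    have h2 : min (v0 - qmin) (qmax - v0) / 2 ≤ (qmax - v0) / 2 := by
      have := min_le_right (v0 - qmin) (qmax - v0); linarith
    have := hv0.1; have := hv0.2
    exact ⟨by cases hs; linarith, by cases hs; linarith⟩
  have hKsub : Set.Icc (u0 - |a|) (u0 + |a|) ×ˢ Set.Icc (v0 - δ) (v0 + δ) ⊆
      Set.Ioo pmin pmax ×ˢ Set.Ioo qmin qmax := Set.prod_mono hIa hδJ
  have hKc : IsCompact (Set.Icc (u0 - |a|) (u0 + |a|) ×ˢ Set.Icc (v0 - δ) (v0 + δ)) :=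
    isCompact_Icc.prod isCompact_Icc
  have hKcv : Convex ℝ (Set.Icc (u0 - |a|) (u0 + |a|) ×ˢ Set.Icc (v0 - δ) (v0 + δ)) :=
    (convex_Icc _ _).prod (convex_Icc _ _)
  have hKne : (u0, v0) ∈ Set.Icc (u0 - |a|) (u0 + |a|) ×ˢ Set.Icc (v0 - δ) (v0 + δ) :=
    Set.mk_mem_prod ⟨by linarith [abs_nonneg a], by linarith [abs_nonneg a]⟩
      ⟨by linarith, by linarith⟩
  obtain ⟨M, hM⟩ := hKc.exists_bound_of_continuousOn (hAf.mono hKsub)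
  have hM0 : 0 ≤ M := le_trans (norm_nonneg _) (hM _ hKne)
  obtain ⟨C, hC⟩ := hKc.exists_bound_of_continuousOn (hB.mono hKsub)
  have hC0 : 0 ≤ C := le_trans (norm_nonneg _) (hC _ hKne)
  have hmemK : ∀ t ε : ℝ, |t| ≤ 1 → 0 < ε → ε < δ →
      (u0 + t * a, v0 + t * ε) ∈ Set.Icc (u0 - |a|) (u0 + |a|) ×ˢ Set.Icc (v0 - δ) (v0 + δ) ∧
      (u0 + t * a, v0 - t * ε) ∈ Set.Icc (u0 - |a|) (u0 + |a|) ×ˢ Set.Icc (v0 - δ) (v0 + δ) := by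
    intro t ε ht hε1 hε2
    have h1 := mem_icc_line (u0 := u0) (c := a) ht
    have h2 := mem_icc_line (u0 := v0) (c := ε) ht
    have h3 := mem_icc_line' (u0 := v0) (c := ε) ht
    have habs : |ε| = ε := abs_of_pos hε1
    rw [habs] at h2 h3
    have m2 : v0 + t * ε ∈ Set.Icc (v0 - δ) (v0 + δ) := ⟨by linarith [h2.1], by linarith [h2.2]⟩
    have m3 : v0 - t * ε ∈ Set.Icc (v0 - δ) (v0 + δ) := ⟨by linarith [h3.1], by linarith [h3.2]⟩
    exact ⟨Set.mk_mem_prod h1 m2, Set.mk_mem_prod h1 m3⟩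
  have hev : Set.Ioo (0:ℝ) δ ∈ 𝓝[>] (0:ℝ) := Ioo_mem_nhdsGT_of_mem ⟨le_refl 0, hδpos⟩
  have key : (∫ t in (-1:ℝ)..1, a ^ 2 * (2 * t) * fderiv ℝ A (u0 + t * a, v0) (0, 1)) = 0 := by
    apply integral_eq_zero_of_lim
      (F := fun ε t => a ^ 2 * ((A (u0 + t * a, v0 + t * ε) - A (u0 + t * a, v0 - t * ε)) / ε)
        + ε * (B (u0 + t * a, v0 + t * ε) - B (u0 + t * a, v0 - t * ε)))
      (B := a ^ 2 * (2 * M) + δ * (2 * C))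
    · -- hzero
      filter_upwards [hev] with ε hε
      have hε1 : (0:ℝ) < ε := hε.1
      have hε2 : ε < δ := hε.2
      have hJε : Set.Icc (v0 - |ε|) (v0 + |ε|) ⊆ Set.Ioo qmin qmax := by
        rw [abs_of_pos hε1]
        exact fun s hs => hδJ ⟨by linarith [hs.1], by linarith [hs.2]⟩
      have h0 := hid u0 v0 a ε hIa hJε
      have hne : ε ≠ 0 := ne_of_gt hε1
      calc (∫ t in (-1:ℝ)..1,
            (a ^ 2 * ((A (u0 + t * a, v0 + t * ε) - A (u0 + t * a, v0 - t * ε)) / ε)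
              + ε * (B (u0 + t * a, v0 + t * ε) - B (u0 + t * a, v0 - t * ε))))
          = ∫ t in (-1:ℝ)..1, ε⁻¹ *
            (a ^ 2 * (A (u0 + t * a, v0 + t * ε) - A (u0 + t * a, v0 - t * ε)) +
             ε ^ 2 * (B (u0 + t * a, v0 + t * ε) - B (u0 + t * a, v0 - t * ε))) := by
            apply intervalIntegral.integral_congr
            intro t _
            field_simp
        _ = ε⁻¹ * ∫ t in (-1:ℝ)..1,
            (a ^ 2 * (A (u0 + t * a, v0 + t * ε) - A (u0 + t * a, v0 - t * ε)) +
             ε ^ 2 * (B (u0 + t * a, v0 + t * ε) - B (u0 + t * a, v0 - t * ε))) :=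
            intervalIntegral.integral_const_mul _ _
        _ = 0 := by rw [h0, mul_zero]
    · -- hmeas
      filter_upwards [hev] with ε hε
      have hcont : ∀ (g : ℝ × ℝ → ℝ),
          ContinuousOn g (Set.Ioo pmin pmax ×ˢ Set.Ioo qmin qmax) → ∀ (ψ : ℝ → ℝ),
          Continuous ψ → (∀ t ∈ Set.Icc (-1:ℝ) 1, ψ t ∈ Set.Icc (v0 - δ) (v0 + δ)) →
          ContinuousOn (fun t => g (u0 + t * a, ψ t)) (Set.Icc (-1:ℝ) 1) := by
        intro g hg ψ hψ hm
        apply hg.comp (Continuous.continuousOn (by fun_prop))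
        intro t ht
        have ht' : |t| ≤ 1 := abs_le.mpr ⟨ht.1, ht.2⟩
        exact Set.mk_mem_prod (hIa (mem_icc_line ht')) (hδJ (hm t ht))
      have hmv : ∀ t ∈ Set.Icc (-1:ℝ) 1, v0 + t * ε ∈ Set.Icc (v0 - δ) (v0 + δ) := by
        intro t ht
        have ht' : |t| ≤ 1 := abs_le.mpr ⟨ht.1, ht.2⟩
        have h2 := mem_icc_line (u0 := v0) (c := ε) ht'
        rw [abs_of_pos hε.1] at h2
        exact ⟨by linarith [h2.1, hε.2.le], by linarith [h2.2, hε.2.le]⟩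
      have hmv' : ∀ t ∈ Set.Icc (-1:ℝ) 1, v0 - t * ε ∈ Set.Icc (v0 - δ) (v0 + δ) := by
        intro t ht
        have ht' : |t| ≤ 1 := abs_le.mpr ⟨ht.1, ht.2⟩
        have h3 := mem_icc_line' (u0 := v0) (c := ε) ht'
        rw [abs_of_pos hε.1] at h3
        exact ⟨by linarith [h3.1, hε.2.le], by linarith [h3.2, hε.2.le]⟩
      have c1 := hcont A hAc (fun t => v0 + t * ε) (by fun_prop) hmv
      have c2 := hcont A hAc (fun t => v0 - t * ε) (by fun_prop) hmv'
      have c3 := hcont B hB (fun t => v0 + t * ε) (by fun_prop) hmv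
      have c4 := hcont B hB (fun t => v0 - t * ε) (by fun_prop) hmv'
      exact (continuousOn_const.mul ((c1.sub c2).div_const ε)).add
        (continuousOn_const.mul (c3.sub c4))
    · -- hbound
      filter_upwards [hev] with ε hε
      intro t ht
      have ht' : |t| ≤ 1 := abs_le.mpr ⟨ht.1, ht.2⟩
      obtain ⟨hp1, hp2⟩ := hmemK t ε ht' hε.1 hε.2
      have hdiff := hKcv.norm_image_sub_le_of_norm_fderiv_le
        (fun x hx => hAd x (hKsub hx)) hM hp2 hp1
      have hsubpt : ((u0 + t * a, v0 + t * ε) : ℝ × ℝ) - (u0 + t * a, v0 - t * ε)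
          = (0, 2 * t * ε) := by
        simp [Prod.ext_iff]; ring
      have hnm : ‖((u0 + t * a, v0 + t * ε) : ℝ × ℝ) - (u0 + t * a, v0 - t * ε)‖ ≤ 2 * ε := by
        rw [hsubpt, Prod.norm_def]
        simp only [norm_zero, Real.norm_eq_abs]
        rw [max_eq_right (abs_nonneg _)]
        rw [abs_mul, abs_mul]
        have : |(2:ℝ)| = 2 := by norm_num
        rw [this, abs_of_pos hε.1]
        nlinarith [abs_nonneg t, hε.1]
      have e1 : |A (u0 + t * a, v0 + t * ε) - A (u0 + t * a, v0 - t * ε)| ≤ M * (2 * ε) := by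
        rw [← Real.norm_eq_abs]
        exact le_trans hdiff (mul_le_mul_of_nonneg_left hnm hM0)
      have e2 : |(A (u0 + t * a, v0 + t * ε) - A (u0 + t * a, v0 - t * ε)) / ε| ≤ 2 * M := by
        rw [abs_div, abs_of_pos hε.1, div_le_iff₀ hε.1]
        nlinarith
      have e3 : |B (u0 + t * a, v0 + t * ε) - B (u0 + t * a, v0 - t * ε)| ≤ 2 * C := by
        have b1 := hC _ hp1; have b2 := hC _ hp2
        rw [Real.norm_eq_abs] at b1 b2
        rw [sub_eq_add_neg]
        exact le_trans (abs_add_le _ _) (by rw [abs_neg]; linarith)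
      calc |a ^ 2 * ((A (u0 + t * a, v0 + t * ε) - A (u0 + t * a, v0 - t * ε)) / ε)
            + ε * (B (u0 + t * a, v0 + t * ε) - B (u0 + t * a, v0 - t * ε))|
          ≤ |a ^ 2 * ((A (u0 + t * a, v0 + t * ε) - A (u0 + t * a, v0 - t * ε)) / ε)|
            + |ε * (B (u0 + t * a, v0 + t * ε) - B (u0 + t * a, v0 - t * ε))| := abs_add_le _ _
        _ ≤ a ^ 2 * (2 * M) + δ * (2 * C) := by
            rw [abs_mul, abs_mul, abs_of_pos hε.1, abs_of_nonneg (sq_nonneg a)]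
            have h4 : 0 ≤ a ^ 2 := sq_nonneg a
            nlinarith [hε.2.le, hε.1.le]
    · -- hlim
      intro t ht
      have ht' : |t| ≤ 1 := abs_le.mpr ⟨ht.1, ht.2⟩
      have hq : ((u0 + t * a, v0) : ℝ × ℝ) ∈ Set.Ioo pmin pmax ×ˢ Set.Ioo qmin qmax :=
        ⟨hIa (mem_icc_line ht'), hv0⟩
      have hdq := hAd _ hq
      have hψ1 : HasDerivAt (fun ε : ℝ => v0 + t * ε) t 0 := by
        simpa using ((hasDerivAt_id (0:ℝ)).const_mul t).const_add v0
      have hψ2 : HasDerivAt (fun ε : ℝ => v0 - t * ε) (-t) 0 := by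
        simpa using ((hasDerivAt_id (0:ℝ)).const_mul t).const_sub v0
      have hδ1 : HasDerivAt (fun ε => A (u0 + t * a, v0 + t * ε))
          (fderiv ℝ A (u0 + t * a, v0) (0, t)) 0 :=
        hasDerivAt_comp_line hdq (hasDerivAt_const 0 (u0 + t * a)) hψ1 (by norm_num)
      have hδ2 : HasDerivAt (fun ε => A (u0 + t * a, v0 - t * ε))
          (fderiv ℝ A (u0 + t * a, v0) (0, -t)) 0 :=
        hasDerivAt_comp_line hdq (hasDerivAt_const 0 (u0 + t * a)) hψ2 (by norm_num)
      have hφ := hδ1.sub hδ2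
      have hval : fderiv ℝ A (u0 + t * a, v0) (0, t) - fderiv ℝ A (u0 + t * a, v0) (0, -t)
          = 2 * t * fderiv ℝ A (u0 + t * a, v0) (0, 1) := by
        rw [fderiv_dir_smul (g := A) (u0 + t * a, v0) t,
          fderiv_dir_smul (g := A) (u0 + t * a, v0) (-t)]
        ring
      rw [hasDerivAt_iff_tendsto_slope] at hφ
      have hslope : Tendsto
          (fun ε => (A (u0 + t * a, v0 + t * ε) - A (u0 + t * a, v0 - t * ε)) / ε)
          (𝓝[>] (0:ℝ)) (𝓝 (2 * t * fderiv ℝ A (u0 + t * a, v0) (0, 1))) := by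
        rw [← hval]
        apply Tendsto.congr _ (hφ.mono_left (nhdsWithin_mono _ (fun x hx => ne_of_gt hx)))
        intro ε
        rw [slope_def_field]
        norm_num
      have hc1 : Tendsto (fun ε : ℝ => ((u0 + t * a, v0 + t * ε) : ℝ × ℝ)) (𝓝[>] (0:ℝ))
          (𝓝 (u0 + t * a, v0)) := by
        apply Tendsto.mono_left _ nhdsWithin_le_nhds
        exact Continuous.tendsto' (by fun_prop) _ _ (by norm_num)
      have hc2 : Tendsto (fun ε : ℝ => ((u0 + t * a, v0 - t * ε) : ℝ × ℝ)) (𝓝[>] (0:ℝ))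
          (𝓝 (u0 + t * a, v0)) := by
        apply Tendsto.mono_left _ nhdsWithin_le_nhds
        exact Continuous.tendsto' (by fun_prop) _ _ (by norm_num)
      have hBc : ContinuousAt B (u0 + t * a, v0) := hB.continuousAt (hDo.mem_nhds hq)
      have hBlim : Tendsto
          (fun ε => ε * (B (u0 + t * a, v0 + t * ε) - B (u0 + t * a, v0 - t * ε)))
          (𝓝[>] (0:ℝ)) (𝓝 0) := by
        have h1 : Tendsto
            (fun ε => B (u0 + t * a, v0 + t * ε) - B (u0 + t * a, v0 - t * ε))
            (𝓝[>] (0:ℝ)) (𝓝 0) := by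
          have := (hBc.tendsto.comp hc1).sub (hBc.tendsto.comp hc2)
          simpa using this
        have h2 : Tendsto (fun ε : ℝ => ε) (𝓝[>] (0:ℝ)) (𝓝 0) :=
          tendsto_id.mono_left nhdsWithin_le_nhds
        simpa using h2.mul h1
      rw [show a ^ 2 * (2 * t) * fderiv ℝ A (u0 + t * a, v0) (0, 1)
          = a ^ 2 * (2 * t * fderiv ℝ A (u0 + t * a, v0) (0, 1)) + 0 by ring]
      exact (tendsto_const_nhds.mul hslope).add hBlim
  have hre : (∫ t in (-1:ℝ)..1, a ^ 2 * (2 * t) * fderiv ℝ A (u0 + t * a, v0) (0, 1))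
      = (a ^ 2 * 2) * ∫ t in (-1:ℝ)..1, t * fderiv ℝ A (u0 + t * a, v0) (0, 1) := by
    rw [← intervalIntegral.integral_const_mul]
    apply intervalIntegral.integral_congr
    intro s _
    ring
  rw [hre] at key
  have hne : a ^ 2 * 2 ≠ 0 := by positivity
  exact (mul_eq_zero.mp key).resolve_left hne


private lemma liouville_aux {pmin pmax qmin qmax : ℝ} {A B : ℝ × ℝ → ℝ}
    (hA : ContDiffOn ℝ 1 A (Set.Ioo pmin pmax ×ˢ Set.Ioo qmin qmax))
    (hB : ContinuousOn B (Set.Ioo pmin pmax ×ˢ Set.Ioo qmin qmax))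
    (hid : ∀ u0 v0 α β : ℝ,
      Set.Icc (u0 - |α|) (u0 + |α|) ⊆ Set.Ioo pmin pmax →
      Set.Icc (v0 - |β|) (v0 + |β|) ⊆ Set.Ioo qmin qmax →
      (∫ t in (-1:ℝ)..1,
        (α ^ 2 * (A (u0 + t * α, v0 + t * β) - A (u0 + t * α, v0 - t * β)) +
         β ^ 2 * (B (u0 + t * α, v0 + t * β) - B (u0 + t * α, v0 - t * β)))) = 0) :
    ∀ v ∈ Set.Ioo qmin qmax, ∀ x ∈ Set.Ioo pmin pmax, ∀ y ∈ Set.Ioo pmin pmax,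
      fderiv ℝ A (x, v) (0, 1) = fderiv ℝ A (y, v) (0, 1) := by
  intro v hv x hx y hy
  have hDo : IsOpen (Set.Ioo pmin pmax ×ˢ Set.Ioo qmin qmax) := isOpen_Ioo.prod isOpen_Ioo
  have hAf : ContinuousOn (fderiv ℝ A) (Set.Ioo pmin pmax ×ˢ Set.Ioo qmin qmax) :=
    hA.continuousOn_fderiv_of_isOpen hDo le_rfl
  have hAvc : ContinuousOn (fun p : ℝ × ℝ => fderiv ℝ A p (0, 1))
      (Set.Ioo pmin pmax ×ˢ Set.Ioo qmin qmax) :=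
    (ContinuousLinearMap.apply ℝ ℝ ((0:ℝ), (1:ℝ))).continuous.comp_continuousOn hAf
  have substit : ∀ u0 c : ℝ, c ≠ 0 → Set.Icc (u0 - |c|) (u0 + |c|) ⊆ Set.Ioo pmin pmax →
      (∫ s in (u0 - c)..(u0 + c), (s - u0) * fderiv ℝ A (s, v) (0, 1)) = 0 := by
    intro u0 c hc hI
    have hm := moment_aux hA hB hid hv hc hI
    have hrw : ∀ t : ℝ, t * fderiv ℝ A (u0 + t * c, v) (0, 1)
        = c⁻¹ * ((fun s => (s - u0) * fderiv ℝ A (s, v) (0, 1)) (c * t + u0)) := by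
      intro t
      have he : u0 + t * c = c * t + u0 := by ring
      rw [he]
      have hb : ((fun s => (s - u0) * fderiv ℝ A (s, v) (0, 1)) (c * t + u0))
          = (c * t + u0 - u0) * fderiv ℝ A (c * t + u0, v) (0, 1) := rfl
      rw [hb]
      field_simp
      ring
    rw [intervalIntegral.integral_congr
      (g := fun t => c⁻¹ * ((fun s => (s - u0) * fderiv ℝ A (s, v) (0, 1)) (c * t + u0)))
      (fun t _ => hrw t)] at hm
    rw [intervalIntegral.integral_const_mul] at hm
    rw [intervalIntegral.integral_comp_mul_add
      (fun s => (s - u0) * fderiv ℝ A (s, v) (0, 1)) hc u0] at hm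
    rw [show c * (-1) + u0 = u0 - c by ring, show c * 1 + u0 = u0 + c by ring,
      smul_eq_mul] at hm
    have hcinv : c⁻¹ ≠ 0 := inv_ne_zero hc
    rcases mul_eq_zero.mp hm with h | h
    · exact absurd h hcinv
    rcases mul_eq_zero.mp h with h' | h'
    · exact absurd h' hcinv
    exact h'
  rcases eq_or_ne x y with rfl | hxy
  · rfl
  obtain ⟨u0, r, aa, hu0x, hu0y, hr, har, haa, hIoor⟩ :
      ∃ u0 r aa : ℝ, u0 - aa = x ∧ u0 + aa = y ∧ 0 < r ∧ |aa| < r ∧ aa ≠ 0 ∧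
        Set.Ioo (u0 - r) (u0 + r) ⊆ Set.Ioo pmin pmax := by
    refine ⟨(x + y) / 2, min ((x + y) / 2 - pmin) (pmax - (x + y) / 2), (y - x) / 2,
      by ring, by ring, ?_, ?_, ?_, ?_⟩
    · have h1 := hx.1; have h2 := hx.2; have h3 := hy.1; have h4 := hy.2
      exact lt_min (by linarith) (by linarith)
    · have h1 := hx.1; have h2 := hx.2; have h3 := hy.1; have h4 := hy.2
      rw [abs_lt]
      constructor
      · have : -((y - x) / 2) < min ((x + y) / 2 - pmin) (pmax - (x + y) / 2) :=
          lt_min (by linarith) (by linarith)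
        linarith
      · exact lt_min (by linarith) (by linarith)
    · intro h; apply hxy; linarith
    · intro s hs
      have h1 := min_le_left ((x + y) / 2 - pmin) (pmax - (x + y) / 2)
      have h2 := min_le_right ((x + y) / 2 - pmin) (pmax - (x + y) / 2)
      exact ⟨by linarith [hs.1], by linarith [hs.2]⟩
  have hAvsl : ContinuousOn (fun s => (s - u0) * fderiv ℝ A (s, v) (0, 1))
      (Set.Ioo pmin pmax) := by
    apply ContinuousOn.mul
    · fun_prop
    · exact hAvc.comp (Continuous.continuousOn (by fun_prop))
        (fun s hs => Set.mk_mem_prod hs hv)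
  have hu0mem : u0 ∈ Set.Ioo (u0 - r) (u0 + r) := ⟨by linarith, by linarith⟩
  have hΦd : ∀ w ∈ Set.Ioo (u0 - r) (u0 + r),
      HasDerivAt (fun w => ∫ s in u0..w, (s - u0) * fderiv ℝ A (s, v) (0, 1))
        ((w - u0) * fderiv ℝ A (w, v) (0, 1)) w := by
    intro w hw
    have hmemw : w ∈ Set.Ioo pmin pmax := hIoor hw
    apply intervalIntegral.integral_hasDerivAt_right
    · exact (hAvsl.mono (Set.ordConnected_Ioo.uIcc_subset (hIoor hu0mem) hmemw)).intervalIntegrable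
    · exact hAvsl.stronglyMeasurableAtFilter isOpen_Ioo w hmemw
    · exact hAvsl.continuousAt (isOpen_Ioo.mem_nhds hmemw)
  have hzero : ∀ z ∈ Set.Ioo (-r) r,
      ((∫ s in u0..(u0 + z), (s - u0) * fderiv ℝ A (s, v) (0, 1)) -
       ∫ s in u0..(u0 - z), (s - u0) * fderiv ℝ A (s, v) (0, 1)) = 0 := by
    intro z hz
    have hzr : |z| < r := abs_lt.mpr ⟨hz.1, hz.2⟩
    have hint1 : IntervalIntegrable (fun s => (s - u0) * fderiv ℝ A (s, v) (0, 1))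
        volume u0 (u0 + z) := by
      apply (hAvsl.mono _).intervalIntegrable
      apply Set.ordConnected_Ioo.uIcc_subset (hIoor hu0mem)
      exact hIoor ⟨by linarith [abs_lt.mp hzr |>.1, abs_lt.mp hzr |>.2],
        by linarith [abs_lt.mp hzr |>.1, abs_lt.mp hzr |>.2]⟩
    have hint2 : IntervalIntegrable (fun s => (s - u0) * fderiv ℝ A (s, v) (0, 1))
        volume u0 (u0 - z) := by
      apply (hAvsl.mono _).intervalIntegrable
      apply Set.ordConnected_Ioo.uIcc_subset (hIoor hu0mem)
      exact hIoor ⟨by linarith [abs_lt.mp hzr |>.1, abs_lt.mp hzr |>.2],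
        by linarith [abs_lt.mp hzr |>.1, abs_lt.mp hzr |>.2]⟩
    rw [intervalIntegral.integral_interval_sub_left hint1 hint2]
    rcases eq_or_ne z 0 with rfl | hzne
    · rw [show u0 - (0:ℝ) = u0 + 0 by ring]
      exact intervalIntegral.integral_same
    · have hIccz : Set.Icc (u0 - |z|) (u0 + |z|) ⊆ Set.Ioo pmin pmax := by
        intro s hs
        apply hIoor
        exact ⟨by linarith [hs.1], by linarith [hs.2]⟩
      exact substit u0 z hzne hIccz
  have haamem : aa ∈ Set.Ioo (-r) r := ⟨(abs_lt.mp har).1, (abs_lt.mp har).2⟩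
  have hymem : u0 + aa ∈ Set.Ioo (u0 - r) (u0 + r) :=
    ⟨by linarith [(abs_lt.mp har).1], by linarith [(abs_lt.mp har).2]⟩
  have hxmem : u0 - aa ∈ Set.Ioo (u0 - r) (u0 + r) :=
    ⟨by linarith [(abs_lt.mp har).2], by linarith [(abs_lt.mp har).1]⟩
  have h1 : HasDerivAt (fun z : ℝ => ∫ s in u0..(u0 + z), (s - u0) * fderiv ℝ A (s, v) (0, 1))
      ((u0 + aa - u0) * fderiv ℝ A (u0 + aa, v) (0, 1)) aa := by
    have := (hΦd (u0 + aa) hymem).comp aa ((hasDerivAt_id aa).const_add u0)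
    simpa [Function.comp_def] using this
  have h2 : HasDerivAt (fun z : ℝ => ∫ s in u0..(u0 - z), (s - u0) * fderiv ℝ A (s, v) (0, 1))
      ((u0 - aa - u0) * fderiv ℝ A (u0 - aa, v) (0, 1) * (-1)) aa := by
    have := (hΦd (u0 - aa) hxmem).comp aa ((hasDerivAt_id aa).const_sub u0)
    simpa [Function.comp_def] using this
  have hd2 := h1.sub h2
  have hEv : HasDerivAt (fun z : ℝ =>
      ((∫ s in u0..(u0 + z), (s - u0) * fderiv ℝ A (s, v) (0, 1)) -
       ∫ s in u0..(u0 - z), (s - u0) * fderiv ℝ A (s, v) (0, 1))) 0 aa := by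
    have heq : (fun z : ℝ =>
        ((∫ s in u0..(u0 + z), (s - u0) * fderiv ℝ A (s, v) (0, 1)) -
         ∫ s in u0..(u0 - z), (s - u0) * fderiv ℝ A (s, v) (0, 1))) =ᶠ[𝓝 aa]
        (fun _ => (0:ℝ)) :=
      Filter.eventually_of_mem (isOpen_Ioo.mem_nhds haamem) hzero
    exact (hasDerivAt_const aa (0:ℝ)).congr_of_eventuallyEq heq
  have huniq := hd2.unique hEv
  have hfin : aa * (fderiv ℝ A (u0 + aa, v) (0, 1) - fderiv ℝ A (u0 - aa, v) (0, 1)) = 0 := by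
    linear_combination huniq
  rw [← hu0x, ← hu0y]
  rcases mul_eq_zero.mp hfin with h | h
  · exact absurd h haa
  · linarith [h]

end

theorem equal_diagonal_energy_implies_liouville
    (umin umax vmin vmax : ℝ)
    (g11 g12 g22 : ℝ × ℝ → ℝ)
    (hg11 : ContDiffOn ℝ 2 g11 (Set.Ioo umin umax ×ˢ Set.Ioo vmin vmax))
    (hg12 : ContDiffOn ℝ 2 g12 (Set.Ioo umin umax ×ˢ Set.Ioo vmin vmax))
    (hg22 : ContDiffOn ℝ 2 g22 (Set.Ioo umin umax ×ˢ Set.Ioo vmin vmax))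
    (hE : ∀ u0 v0 α β : ℝ,
      Set.Icc (u0 - |α|) (u0 + |α|) ⊆ Set.Ioo umin umax →
      Set.Icc (v0 - |β|) (v0 + |β|) ⊆ Set.Ioo vmin vmax →
      (∫ t in (-1:ℝ)..1,
          (α ^ 2 * g11 (u0 + t * α, v0 + t * β) +
           2 * α * β * g12 (u0 + t * α, v0 + t * β) +
           β ^ 2 * g22 (u0 + t * α, v0 + t * β))) =
      (∫ t in (-1:ℝ)..1,
          (α ^ 2 * g11 (u0 - t * α, v0 + t * β) -
           2 * α * β * g12 (u0 - t * α, v0 + t * β) +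
           β ^ 2 * g22 (u0 - t * α, v0 + t * β)))) :
    (∀ p ∈ Set.Ioo umin umax ×ˢ Set.Ioo vmin vmax, g12 p = 0) ∧
    ∃ U1 U2 V1 V2 : ℝ → ℝ, ∀ u ∈ Set.Ioo umin umax, ∀ v ∈ Set.Ioo vmin vmax,
      g11 (u, v) = U1 u + V1 v ∧ g22 (u, v) = U2 u + V2 v := by
  have hDo : IsOpen (Set.Ioo umin umax ×ˢ Set.Ioo vmin vmax) := isOpen_Ioo.prod isOpen_Ioo
  have c11 : ContinuousOn g11 (Set.Ioo umin umax ×ˢ Set.Ioo vmin vmax) := hg11.continuousOn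
  have c12 : ContinuousOn g12 (Set.Ioo umin umax ×ˢ Set.Ioo vmin vmax) := hg12.continuousOn
  have c22 : ContinuousOn g22 (Set.Ioo umin umax ×ˢ Set.Ioo vmin vmax) := hg22.continuousOn
  -- integrability helper
  have intg : ∀ g : ℝ × ℝ → ℝ, ContinuousOn g (Set.Ioo umin umax ×ˢ Set.Ioo vmin vmax) →
      ∀ φ ψ : ℝ → ℝ, Continuous φ → Continuous ψ →
      (∀ t : ℝ, |t| ≤ 1 → (φ t, ψ t) ∈ Set.Ioo umin umax ×ˢ Set.Ioo vmin vmax) →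
      IntervalIntegrable (fun t => g (φ t, ψ t)) MeasureTheory.volume (-1:ℝ) 1 := by
    intro g hg φ ψ hφ hψ hm
    apply ContinuousOn.intervalIntegrable
    rw [Set.uIcc_of_le (by norm_num : (-1:ℝ) ≤ 1)]
    apply hg.comp (Continuous.continuousOn (hφ.prodMk hψ))
    intro t ht
    exact hm t (abs_le.mpr ⟨ht.1, ht.2⟩)
  -- the identity without reflection
  have idB : ∀ u0 v0 α β : ℝ,
      Set.Icc (u0 - |α|) (u0 + |α|) ⊆ Set.Ioo umin umax →
      Set.Icc (v0 - |β|) (v0 + |β|) ⊆ Set.Ioo vmin vmax →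
      (∫ t in (-1:ℝ)..1,
        (α ^ 2 * (g11 (u0 + t * α, v0 + t * β) - g11 (u0 - t * α, v0 + t * β)) +
         2 * α * β * (g12 (u0 + t * α, v0 + t * β) + g12 (u0 - t * α, v0 + t * β)) +
         β ^ 2 * (g22 (u0 + t * α, v0 + t * β) - g22 (u0 - t * α, v0 + t * β)))) = 0 := by
    intro u0 v0 α β hI hJ
    have h1 := hE u0 v0 α β hI hJ
    have mm : ∀ t : ℝ, |t| ≤ 1 →
        ((u0 + t * α, v0 + t * β) ∈ Set.Ioo umin umax ×ˢ Set.Ioo vmin vmax) ∧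
        ((u0 - t * α, v0 + t * β) ∈ Set.Ioo umin umax ×ˢ Set.Ioo vmin vmax) := fun t ht =>
      ⟨Set.mk_mem_prod (hI (mem_icc_line ht)) (hJ (mem_icc_line ht)),
       Set.mk_mem_prod (hI (mem_icc_line' ht)) (hJ (mem_icc_line ht))⟩
    have iP : IntervalIntegrable (fun t =>
        α ^ 2 * g11 (u0 + t * α, v0 + t * β) + 2 * α * β * g12 (u0 + t * α, v0 + t * β) +
        β ^ 2 * g22 (u0 + t * α, v0 + t * β)) MeasureTheory.volume (-1:ℝ) 1 := by
      exact (((intg g11 c11 _ _ (by fun_prop) (by fun_prop) (fun t ht => (mm t ht).1)).const_mul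
          (α ^ 2)).add ((intg g12 c12 _ _ (by fun_prop) (by fun_prop)
          (fun t ht => (mm t ht).1)).const_mul (2 * α * β))).add
        ((intg g22 c22 _ _ (by fun_prop) (by fun_prop) (fun t ht => (mm t ht).1)).const_mul (β ^ 2))
    have iQ : IntervalIntegrable (fun t =>
        α ^ 2 * g11 (u0 - t * α, v0 + t * β) - 2 * α * β * g12 (u0 - t * α, v0 + t * β) +
        β ^ 2 * g22 (u0 - t * α, v0 + t * β)) MeasureTheory.volume (-1:ℝ) 1 := by
      exact (((intg g11 c11 _ _ (by fun_prop) (by fun_prop) (fun t ht => (mm t ht).2)).const_mul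
          (α ^ 2)).sub ((intg g12 c12 _ _ (by fun_prop) (by fun_prop)
          (fun t ht => (mm t ht).2)).const_mul (2 * α * β))).add
        ((intg g22 c22 _ _ (by fun_prop) (by fun_prop) (fun t ht => (mm t ht).2)).const_mul (β ^ 2))
    calc (∫ t in (-1:ℝ)..1,
        (α ^ 2 * (g11 (u0 + t * α, v0 + t * β) - g11 (u0 - t * α, v0 + t * β)) +
         2 * α * β * (g12 (u0 + t * α, v0 + t * β) + g12 (u0 - t * α, v0 + t * β)) +
         β ^ 2 * (g22 (u0 + t * α, v0 + t * β) - g22 (u0 - t * α, v0 + t * β))))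
        = ∫ t in (-1:ℝ)..1,
          ((α ^ 2 * g11 (u0 + t * α, v0 + t * β) + 2 * α * β * g12 (u0 + t * α, v0 + t * β) +
            β ^ 2 * g22 (u0 + t * α, v0 + t * β)) -
           (α ^ 2 * g11 (u0 - t * α, v0 + t * β) - 2 * α * β * g12 (u0 - t * α, v0 + t * β) +
            β ^ 2 * g22 (u0 - t * α, v0 + t * β))) := by
          apply intervalIntegral.integral_congr
          intro t _
          ring
      _ = (∫ t in (-1:ℝ)..1,
          (α ^ 2 * g11 (u0 + t * α, v0 + t * β) + 2 * α * β * g12 (u0 + t * α, v0 + t * β) +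
            β ^ 2 * g22 (u0 + t * α, v0 + t * β))) -
          ∫ t in (-1:ℝ)..1,
          (α ^ 2 * g11 (u0 - t * α, v0 + t * β) - 2 * α * β * g12 (u0 - t * α, v0 + t * β) +
            β ^ 2 * g22 (u0 - t * α, v0 + t * β)) := intervalIntegral.integral_sub iP iQ
      _ = 0 := by rw [h1, sub_self]
  -- the flipped identity
  have idA : ∀ u0 v0 α β : ℝ,
      Set.Icc (u0 - |α|) (u0 + |α|) ⊆ Set.Ioo umin umax →
      Set.Icc (v0 - |β|) (v0 + |β|) ⊆ Set.Ioo vmin vmax →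
      (∫ t in (-1:ℝ)..1,
        (α ^ 2 * (g11 (u0 + t * α, v0 + t * β) - g11 (u0 + t * α, v0 - t * β)) +
         2 * α * β * (g12 (u0 + t * α, v0 + t * β) + g12 (u0 + t * α, v0 - t * β)) +
         β ^ 2 * (g22 (u0 + t * α, v0 + t * β) - g22 (u0 + t * α, v0 - t * β)))) = 0 := by
    intro u0 v0 α β hI hJ
    have h1 := hE u0 v0 α β hI hJ
    have hflip : (∫ t in (-1:ℝ)..1,
        (α ^ 2 * g11 (u0 - t * α, v0 + t * β) - 2 * α * β * g12 (u0 - t * α, v0 + t * β) +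
         β ^ 2 * g22 (u0 - t * α, v0 + t * β))) = ∫ t in (-1:ℝ)..1,
        (α ^ 2 * g11 (u0 + t * α, v0 - t * β) - 2 * α * β * g12 (u0 + t * α, v0 - t * β) +
         β ^ 2 * g22 (u0 + t * α, v0 - t * β)) := by
      have h := intervalIntegral.integral_comp_neg (a := (-1:ℝ)) (b := (1:ℝ))
        (fun t => α ^ 2 * g11 (u0 - t * α, v0 + t * β) -
          2 * α * β * g12 (u0 - t * α, v0 + t * β) + β ^ 2 * g22 (u0 - t * α, v0 + t * β))
      rw [neg_neg] at h
      rw [← h]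
      apply intervalIntegral.integral_congr
      intro s _
      show α ^ 2 * g11 (u0 - -s * α, v0 + -s * β) - 2 * α * β * g12 (u0 - -s * α, v0 + -s * β) +
          β ^ 2 * g22 (u0 - -s * α, v0 + -s * β) = _
      rw [show u0 - -s * α = u0 + s * α by ring, show v0 + -s * β = v0 - s * β by ring]
    rw [hflip] at h1
    have mm : ∀ t : ℝ, |t| ≤ 1 →
        ((u0 + t * α, v0 + t * β) ∈ Set.Ioo umin umax ×ˢ Set.Ioo vmin vmax) ∧
        ((u0 + t * α, v0 - t * β) ∈ Set.Ioo umin umax ×ˢ Set.Ioo vmin vmax) := fun t ht =>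
      ⟨Set.mk_mem_prod (hI (mem_icc_line ht)) (hJ (mem_icc_line ht)),
       Set.mk_mem_prod (hI (mem_icc_line ht)) (hJ (mem_icc_line' ht))⟩
    have iP : IntervalIntegrable (fun t =>
        α ^ 2 * g11 (u0 + t * α, v0 + t * β) + 2 * α * β * g12 (u0 + t * α, v0 + t * β) +
        β ^ 2 * g22 (u0 + t * α, v0 + t * β)) MeasureTheory.volume (-1:ℝ) 1 := by
      exact (((intg g11 c11 _ _ (by fun_prop) (by fun_prop) (fun t ht => (mm t ht).1)).const_mul
          (α ^ 2)).add ((intg g12 c12 _ _ (by fun_prop) (by fun_prop)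
          (fun t ht => (mm t ht).1)).const_mul (2 * α * β))).add
        ((intg g22 c22 _ _ (by fun_prop) (by fun_prop) (fun t ht => (mm t ht).1)).const_mul (β ^ 2))
    have iQ : IntervalIntegrable (fun t =>
        α ^ 2 * g11 (u0 + t * α, v0 - t * β) - 2 * α * β * g12 (u0 + t * α, v0 - t * β) +
        β ^ 2 * g22 (u0 + t * α, v0 - t * β)) MeasureTheory.volume (-1:ℝ) 1 := by
      exact (((intg g11 c11 _ _ (by fun_prop) (by fun_prop) (fun t ht => (mm t ht).2)).const_mul
          (α ^ 2)).sub ((intg g12 c12 _ _ (by fun_prop) (by fun_prop)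
          (fun t ht => (mm t ht).2)).const_mul (2 * α * β))).add
        ((intg g22 c22 _ _ (by fun_prop) (by fun_prop) (fun t ht => (mm t ht).2)).const_mul (β ^ 2))
    calc (∫ t in (-1:ℝ)..1,
        (α ^ 2 * (g11 (u0 + t * α, v0 + t * β) - g11 (u0 + t * α, v0 - t * β)) +
         2 * α * β * (g12 (u0 + t * α, v0 + t * β) + g12 (u0 + t * α, v0 - t * β)) +
         β ^ 2 * (g22 (u0 + t * α, v0 + t * β) - g22 (u0 + t * α, v0 - t * β))))
        = ∫ t in (-1:ℝ)..1,
          ((α ^ 2 * g11 (u0 + t * α, v0 + t * β) + 2 * α * β * g12 (u0 + t * α, v0 + t * β) +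
            β ^ 2 * g22 (u0 + t * α, v0 + t * β)) -
           (α ^ 2 * g11 (u0 + t * α, v0 - t * β) - 2 * α * β * g12 (u0 + t * α, v0 - t * β) +
            β ^ 2 * g22 (u0 + t * α, v0 - t * β))) := by
          apply intervalIntegral.integral_congr
          intro t _
          ring
      _ = (∫ t in (-1:ℝ)..1,
          (α ^ 2 * g11 (u0 + t * α, v0 + t * β) + 2 * α * β * g12 (u0 + t * α, v0 + t * β) +
            β ^ 2 * g22 (u0 + t * α, v0 + t * β))) -
          ∫ t in (-1:ℝ)..1,
          (α ^ 2 * g11 (u0 + t * α, v0 - t * β) - 2 * α * β * g12 (u0 + t * α, v0 - t * β) +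
            β ^ 2 * g22 (u0 + t * α, v0 - t * β)) := intervalIntegral.integral_sub iP iQ
      _ = 0 := by rw [h1, sub_self]
  -- Step: g12 vanishes on D
  have h120 : ∀ p ∈ Set.Ioo umin umax ×ˢ Set.Ioo vmin vmax, g12 p = 0 := by
    rintro ⟨u0, v0⟩ hp
    have hu0 : u0 ∈ Set.Ioo umin umax := hp.1
    have hv0 : v0 ∈ Set.Ioo vmin vmax := hp.2
    obtain ⟨δ, hδpos, hδI, hδJ⟩ : ∃ δ > 0,
        Set.Icc (u0 - δ) (u0 + δ) ⊆ Set.Ioo umin umax ∧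
        Set.Icc (v0 - δ) (v0 + δ) ⊆ Set.Ioo vmin vmax := by
      have h1 := hu0.1; have h2 := hu0.2; have h3 := hv0.1; have h4 := hv0.2
      refine ⟨min (min (u0 - umin) (umax - u0)) (min (v0 - vmin) (vmax - v0)) / 2, ?_, ?_, ?_⟩
      · have : 0 < min (min (u0 - umin) (umax - u0)) (min (v0 - vmin) (vmax - v0)) :=
          lt_min (lt_min (by linarith) (by linarith)) (lt_min (by linarith) (by linarith))
        linarith
      · intro s hs
        have e1 : min (min (u0 - umin) (umax - u0)) (min (v0 - vmin) (vmax - v0)) ≤ u0 - umin :=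
          le_trans (min_le_left _ _) (min_le_left _ _)
        have e2 : min (min (u0 - umin) (umax - u0)) (min (v0 - vmin) (vmax - v0)) ≤ umax - u0 :=
          le_trans (min_le_left _ _) (min_le_right _ _)
        have : 0 < min (min (u0 - umin) (umax - u0)) (min (v0 - vmin) (vmax - v0)) :=
          lt_min (lt_min (by linarith) (by linarith)) (lt_min (by linarith) (by linarith))
        exact ⟨by linarith [hs.1], by linarith [hs.2]⟩
      · intro s hs
        have e1 : min (min (u0 - umin) (umax - u0)) (min (v0 - vmin) (vmax - v0)) ≤ v0 - vmin :=
          le_trans (min_le_right _ _) (min_le_left _ _)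
        have e2 : min (min (u0 - umin) (umax - u0)) (min (v0 - vmin) (vmax - v0)) ≤ vmax - v0 :=
          le_trans (min_le_right _ _) (min_le_right _ _)
        have : 0 < min (min (u0 - umin) (umax - u0)) (min (v0 - vmin) (vmax - v0)) :=
          lt_min (lt_min (by linarith) (by linarith)) (lt_min (by linarith) (by linarith))
        exact ⟨by linarith [hs.1], by linarith [hs.2]⟩
    obtain ⟨C1, hC1⟩ := (isCompact_Icc.prod isCompact_Icc).exists_bound_of_continuousOn
      (c11.mono (Set.prod_mono hδI hδJ))
    obtain ⟨C2, hC2⟩ := (isCompact_Icc.prod isCompact_Icc).exists_bound_of_continuousOn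
      (c12.mono (Set.prod_mono hδI hδJ))
    obtain ⟨C3, hC3⟩ := (isCompact_Icc.prod isCompact_Icc).exists_bound_of_continuousOn
      (c22.mono (Set.prod_mono hδI hδJ))
    have hKmem : ∀ t ε : ℝ, |t| ≤ 1 → 0 < ε → ε < δ →
        ((u0 + t * ε, v0 + t * ε) ∈ Set.Icc (u0 - δ) (u0 + δ) ×ˢ Set.Icc (v0 - δ) (v0 + δ)) ∧
        ((u0 + t * ε, v0 - t * ε) ∈ Set.Icc (u0 - δ) (u0 + δ) ×ˢ Set.Icc (v0 - δ) (v0 + δ)) := by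
      intro t ε ht hε1 hε2
      have h1 := mem_icc_line (u0 := u0) (c := ε) ht
      have h2 := mem_icc_line (u0 := v0) (c := ε) ht
      have h3 := mem_icc_line' (u0 := v0) (c := ε) ht
      rw [abs_of_pos hε1] at h1 h2 h3
      exact ⟨Set.mk_mem_prod ⟨by linarith [h1.1], by linarith [h1.2]⟩
          ⟨by linarith [h2.1], by linarith [h2.2]⟩,
        Set.mk_mem_prod ⟨by linarith [h1.1], by linarith [h1.2]⟩
          ⟨by linarith [h3.1], by linarith [h3.2]⟩⟩
    have hev : Set.Ioo (0:ℝ) δ ∈ 𝓝[>] (0:ℝ) := Ioo_mem_nhdsGT_of_mem ⟨le_refl 0, hδpos⟩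
    have key : (∫ _t in (-1:ℝ)..1, (4 * g12 (u0, v0) : ℝ)) = 0 := by
      apply integral_eq_zero_of_lim (F := fun ε t =>
          (g11 (u0 + t * ε, v0 + t * ε) - g11 (u0 + t * ε, v0 - t * ε)) +
          2 * (g12 (u0 + t * ε, v0 + t * ε) + g12 (u0 + t * ε, v0 - t * ε)) +
          (g22 (u0 + t * ε, v0 + t * ε) - g22 (u0 + t * ε, v0 - t * ε)))
        (B := 2 * C1 + 4 * C2 + 2 * C3)
      · filter_upwards [hev] with ε hε
        have hε1 : (0:ℝ) < ε := hε.1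
        have hne2 : (ε:ℝ) ^ 2 ≠ 0 := pow_ne_zero 2 (ne_of_gt hε1)
        have hIε : Set.Icc (u0 - |ε|) (u0 + |ε|) ⊆ Set.Ioo umin umax := by
          rw [abs_of_pos hε1]
          exact fun s hs => hδI ⟨by linarith [hs.1, hε.2.le], by linarith [hs.2, hε.2.le]⟩
        have hJε : Set.Icc (v0 - |ε|) (v0 + |ε|) ⊆ Set.Ioo vmin vmax := by
          rw [abs_of_pos hε1]
          exact fun s hs => hδJ ⟨by linarith [hs.1, hε.2.le], by linarith [hs.2, hε.2.le]⟩
        have h0 := idA u0 v0 ε ε hIε hJε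
        calc (∫ t in (-1:ℝ)..1,
              ((g11 (u0 + t * ε, v0 + t * ε) - g11 (u0 + t * ε, v0 - t * ε)) +
               2 * (g12 (u0 + t * ε, v0 + t * ε) + g12 (u0 + t * ε, v0 - t * ε)) +
               (g22 (u0 + t * ε, v0 + t * ε) - g22 (u0 + t * ε, v0 - t * ε))))
            = ∫ t in (-1:ℝ)..1, (ε ^ 2)⁻¹ *
              (ε ^ 2 * (g11 (u0 + t * ε, v0 + t * ε) - g11 (u0 + t * ε, v0 - t * ε)) +
               2 * ε * ε * (g12 (u0 + t * ε, v0 + t * ε) + g12 (u0 + t * ε, v0 - t * ε)) +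
               ε ^ 2 * (g22 (u0 + t * ε, v0 + t * ε) - g22 (u0 + t * ε, v0 - t * ε))) := by
              apply intervalIntegral.integral_congr
              intro t _
              field_simp
          _ = (ε ^ 2)⁻¹ * ∫ t in (-1:ℝ)..1,
              (ε ^ 2 * (g11 (u0 + t * ε, v0 + t * ε) - g11 (u0 + t * ε, v0 - t * ε)) +
               2 * ε * ε * (g12 (u0 + t * ε, v0 + t * ε) + g12 (u0 + t * ε, v0 - t * ε)) +
               ε ^ 2 * (g22 (u0 + t * ε, v0 + t * ε) - g22 (u0 + t * ε, v0 - t * ε))) :=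
              intervalIntegral.integral_const_mul _ _
          _ = 0 := by rw [h0, mul_zero]
      · filter_upwards [hev] with ε hε
        have hcont : ∀ g : ℝ × ℝ → ℝ,
            ContinuousOn g (Set.Ioo umin umax ×ˢ Set.Ioo vmin vmax) → ∀ ψ : ℝ → ℝ,
            Continuous ψ → (∀ t ∈ Set.Icc (-1:ℝ) 1, ψ t ∈ Set.Icc (v0 - δ) (v0 + δ)) →
            ContinuousOn (fun t => g (u0 + t * ε, ψ t)) (Set.Icc (-1:ℝ) 1) := by
          intro g hg ψ hψ hm
          apply hg.comp (Continuous.continuousOn (by fun_prop))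
          intro t ht
          have ht' : |t| ≤ 1 := abs_le.mpr ⟨ht.1, ht.2⟩
          have h1 := mem_icc_line (u0 := u0) (c := ε) ht'
          rw [abs_of_pos hε.1] at h1
          exact Set.mk_mem_prod
            (hδI ⟨by linarith [h1.1, hε.2.le], by linarith [h1.2, hε.2.le]⟩) (hδJ (hm t ht))
        have hmv : ∀ t ∈ Set.Icc (-1:ℝ) 1, v0 + t * ε ∈ Set.Icc (v0 - δ) (v0 + δ) := by
          intro t ht
          have ht' : |t| ≤ 1 := abs_le.mpr ⟨ht.1, ht.2⟩
          have h2 := mem_icc_line (u0 := v0) (c := ε) ht'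
          rw [abs_of_pos hε.1] at h2
          exact ⟨by linarith [h2.1, hε.2.le], by linarith [h2.2, hε.2.le]⟩
        have hmv' : ∀ t ∈ Set.Icc (-1:ℝ) 1, v0 - t * ε ∈ Set.Icc (v0 - δ) (v0 + δ) := by
          intro t ht
          have ht' : |t| ≤ 1 := abs_le.mpr ⟨ht.1, ht.2⟩
          have h3 := mem_icc_line' (u0 := v0) (c := ε) ht'
          rw [abs_of_pos hε.1] at h3
          exact ⟨by linarith [h3.1, hε.2.le], by linarith [h3.2, hε.2.le]⟩
        have d1 := hcont g11 c11 _ (by fun_prop) hmv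
        have d2 := hcont g11 c11 _ (by fun_prop) hmv'
        have d3 := hcont g12 c12 _ (by fun_prop) hmv
        have d4 := hcont g12 c12 _ (by fun_prop) hmv'
        have d5 := hcont g22 c22 _ (by fun_prop) hmv
        have d6 := hcont g22 c22 _ (by fun_prop) hmv'
        exact ((d1.sub d2).add (continuousOn_const.mul (d3.add d4))).add (d5.sub d6)
      · filter_upwards [hev] with ε hε
        intro t ht
        have ht' : |t| ≤ 1 := abs_le.mpr ⟨ht.1, ht.2⟩
        obtain ⟨hp1, hp2⟩ := hKmem t ε ht' hε.1 hε.2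
        have b1 := hC1 _ hp1; have b1' := hC1 _ hp2
        have b2 := hC2 _ hp1; have b2' := hC2 _ hp2
        have b3 := hC3 _ hp1; have b3' := hC3 _ hp2
        rw [Real.norm_eq_abs] at b1 b1' b2 b2' b3 b3'
        have t1 : |g11 (u0 + t * ε, v0 + t * ε) - g11 (u0 + t * ε, v0 - t * ε)| ≤ 2 * C1 := by
          rw [sub_eq_add_neg]
          exact le_trans (abs_add_le _ _) (by rw [abs_neg]; linarith [abs_le.mp b1])
        have t2 : |g12 (u0 + t * ε, v0 + t * ε) + g12 (u0 + t * ε, v0 - t * ε)| ≤ 2 * C2 :=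
          le_trans (abs_add_le _ _) (by linarith)
        have t3 : |g22 (u0 + t * ε, v0 + t * ε) - g22 (u0 + t * ε, v0 - t * ε)| ≤ 2 * C3 := by
          rw [sub_eq_add_neg]
          exact le_trans (abs_add_le _ _) (by rw [abs_neg]; linarith)
        have t2' : |2 * (g12 (u0 + t * ε, v0 + t * ε) + g12 (u0 + t * ε, v0 - t * ε))| ≤ 4 * C2 := by
          rw [abs_mul, show |(2:ℝ)| = 2 by norm_num]
          linarith
        calc |(g11 (u0 + t * ε, v0 + t * ε) - g11 (u0 + t * ε, v0 - t * ε)) +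
              2 * (g12 (u0 + t * ε, v0 + t * ε) + g12 (u0 + t * ε, v0 - t * ε)) +
              (g22 (u0 + t * ε, v0 + t * ε) - g22 (u0 + t * ε, v0 - t * ε))|
            ≤ |(g11 (u0 + t * ε, v0 + t * ε) - g11 (u0 + t * ε, v0 - t * ε)) +
              2 * (g12 (u0 + t * ε, v0 + t * ε) + g12 (u0 + t * ε, v0 - t * ε))| +
              |g22 (u0 + t * ε, v0 + t * ε) - g22 (u0 + t * ε, v0 - t * ε)| := abs_add_le _ _
          _ ≤ 2 * C1 + 4 * C2 + 2 * C3 := by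
              have := abs_add_le (g11 (u0 + t * ε, v0 + t * ε) - g11 (u0 + t * ε, v0 - t * ε))
                (2 * (g12 (u0 + t * ε, v0 + t * ε) + g12 (u0 + t * ε, v0 - t * ε)))
              linarith
      · intro t _
        have hc1 : Filter.Tendsto (fun ε : ℝ => ((u0 + t * ε, v0 + t * ε) : ℝ × ℝ)) (𝓝[>] (0:ℝ))
            (𝓝 (u0, v0)) := by
          apply Filter.Tendsto.mono_left _ nhdsWithin_le_nhds
          exact Continuous.tendsto' (by fun_prop) _ _ (by norm_num)
        have hc2 : Filter.Tendsto (fun ε : ℝ => ((u0 + t * ε, v0 - t * ε) : ℝ × ℝ)) (𝓝[>] (0:ℝ))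
            (𝓝 (u0, v0)) := by
          apply Filter.Tendsto.mono_left _ nhdsWithin_le_nhds
          exact Continuous.tendsto' (by fun_prop) _ _ (by norm_num)
        have ca11 : ContinuousAt g11 (u0, v0) := c11.continuousAt (hDo.mem_nhds hp)
        have ca12 : ContinuousAt g12 (u0, v0) := c12.continuousAt (hDo.mem_nhds hp)
        have ca22 : ContinuousAt g22 (u0, v0) := c22.continuousAt (hDo.mem_nhds hp)
        have T : Filter.Tendsto (fun ε =>
            (g11 (u0 + t * ε, v0 + t * ε) - g11 (u0 + t * ε, v0 - t * ε)) +
            2 * (g12 (u0 + t * ε, v0 + t * ε) + g12 (u0 + t * ε, v0 - t * ε)) +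
            (g22 (u0 + t * ε, v0 + t * ε) - g22 (u0 + t * ε, v0 - t * ε))) (𝓝[>] (0:ℝ))
            (𝓝 ((g11 (u0, v0) - g11 (u0, v0)) + 2 * (g12 (u0, v0) + g12 (u0, v0)) +
              (g22 (u0, v0) - g22 (u0, v0)))) :=
          (((ca11.tendsto.comp hc1).sub (ca11.tendsto.comp hc2)).add
            (((ca12.tendsto.comp hc1).add (ca12.tendsto.comp hc2)).const_mul 2)).add
            ((ca22.tendsto.comp hc1).sub (ca22.tendsto.comp hc2))
        rw [show (4 * g12 (u0, v0) : ℝ) = (g11 (u0, v0) - g11 (u0, v0)) +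
          2 * (g12 (u0, v0) + g12 (u0, v0)) + (g22 (u0, v0) - g22 (u0, v0)) by ring]
        exact T
    rw [intervalIntegral.integral_const] at key
    norm_num at key
    exact key
  -- reduced identities
  have idA2 : ∀ u0 v0 α β : ℝ,
      Set.Icc (u0 - |α|) (u0 + |α|) ⊆ Set.Ioo umin umax →
      Set.Icc (v0 - |β|) (v0 + |β|) ⊆ Set.Ioo vmin vmax →
      (∫ t in (-1:ℝ)..1,
        (α ^ 2 * (g11 (u0 + t * α, v0 + t * β) - g11 (u0 + t * α, v0 - t * β)) +
         β ^ 2 * (g22 (u0 + t * α, v0 + t * β) - g22 (u0 + t * α, v0 - t * β)))) = 0 := by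
    intro u0 v0 α β hI hJ
    rw [← idA u0 v0 α β hI hJ]
    apply intervalIntegral.integral_congr
    intro t ht
    rw [Set.uIcc_of_le (by norm_num : (-1:ℝ) ≤ 1)] at ht
    have ht' : |t| ≤ 1 := abs_le.mpr ⟨ht.1, ht.2⟩
    beta_reduce
    rw [h120 _ (Set.mk_mem_prod (hI (mem_icc_line ht')) (hJ (mem_icc_line ht'))),
        h120 _ (Set.mk_mem_prod (hI (mem_icc_line ht')) (hJ (mem_icc_line' ht')))]
    ring
  have idB2 : ∀ u0 v0 α β : ℝ,
      Set.Icc (u0 - |α|) (u0 + |α|) ⊆ Set.Ioo umin umax →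
      Set.Icc (v0 - |β|) (v0 + |β|) ⊆ Set.Ioo vmin vmax →
      (∫ t in (-1:ℝ)..1,
        (α ^ 2 * (g11 (u0 + t * α, v0 + t * β) - g11 (u0 - t * α, v0 + t * β)) +
         β ^ 2 * (g22 (u0 + t * α, v0 + t * β) - g22 (u0 - t * α, v0 + t * β)))) = 0 := by
    intro u0 v0 α β hI hJ
    rw [← idB u0 v0 α β hI hJ]
    apply intervalIntegral.integral_congr
    intro t ht
    rw [Set.uIcc_of_le (by norm_num : (-1:ℝ) ≤ 1)] at ht
    have ht' : |t| ≤ 1 := abs_le.mpr ⟨ht.1, ht.2⟩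
    beta_reduce
    rw [h120 _ (Set.mk_mem_prod (hI (mem_icc_line ht')) (hJ (mem_icc_line ht'))),
        h120 _ (Set.mk_mem_prod (hI (mem_icc_line' ht')) (hJ (mem_icc_line ht')))]
    ring
  -- constancy of the u-derivative of g11 in u and of the v-derivative of g22 in v
  have const1 := liouville_aux (hg11.of_le one_le_two) c22 idA2
  have hswapcd : ContDiffOn ℝ 1 (fun p : ℝ × ℝ => ((p.2 : ℝ), (p.1 : ℝ)))
      (Set.Ioo vmin vmax ×ˢ Set.Ioo umin umax) := (contDiff_snd.prodMk contDiff_fst).contDiffOn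
  have hA' : ContDiffOn ℝ 1 (fun p : ℝ × ℝ => g22 (p.2, p.1))
      (Set.Ioo vmin vmax ×ˢ Set.Ioo umin umax) :=
    (hg22.of_le one_le_two).comp hswapcd (fun p hp => Set.mk_mem_prod hp.2 hp.1)
  have hB' : ContinuousOn (fun p : ℝ × ℝ => g11 (p.2, p.1))
      (Set.Ioo vmin vmax ×ˢ Set.Ioo umin umax) :=
    c11.comp (Continuous.continuousOn (by fun_prop)) (fun p hp => Set.mk_mem_prod hp.2 hp.1)
  have hid' : ∀ u0 v0 α β : ℝ,
      Set.Icc (u0 - |α|) (u0 + |α|) ⊆ Set.Ioo vmin vmax →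
      Set.Icc (v0 - |β|) (v0 + |β|) ⊆ Set.Ioo umin umax →
      (∫ t in (-1:ℝ)..1,
        (α ^ 2 * ((fun p : ℝ × ℝ => g22 (p.2, p.1)) (u0 + t * α, v0 + t * β) -
                  (fun p : ℝ × ℝ => g22 (p.2, p.1)) (u0 + t * α, v0 - t * β)) +
         β ^ 2 * ((fun p : ℝ × ℝ => g11 (p.2, p.1)) (u0 + t * α, v0 + t * β) -
                  (fun p : ℝ × ℝ => g11 (p.2, p.1)) (u0 + t * α, v0 - t * β)))) = 0 := by
    intro u0 v0 α β hJ' hI'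
    rw [← idB2 v0 u0 β α hI' hJ']
    apply intervalIntegral.integral_congr
    intro t _
    show α ^ 2 * (g22 (v0 + t * β, u0 + t * α) - g22 (v0 - t * β, u0 + t * α)) +
        β ^ 2 * (g11 (v0 + t * β, u0 + t * α) - g11 (v0 - t * β, u0 + t * α)) = _
    ring
  have const2' := liouville_aux hA' hB' hid'
  have hg22d : ∀ p ∈ Set.Ioo umin umax ×ˢ Set.Ioo vmin vmax, DifferentiableAt ℝ g22 p :=
    fun p hp => ((hg22.of_le one_le_two).differentiableOn one_ne_zero).differentiableAt
      (hDo.mem_nhds hp)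
  have const2 : ∀ u ∈ Set.Ioo umin umax, ∀ x ∈ Set.Ioo vmin vmax, ∀ y ∈ Set.Ioo vmin vmax,
      fderiv ℝ g22 (u, x) (1, 0) = fderiv ℝ g22 (u, y) (1, 0) := by
    intro u hu x hx y hy
    have h := const2' u hu x hx y hy
    rw [fderiv_swap_apply (hg22d (u, x) (Set.mk_mem_prod hu hx)),
       fderiv_swap_apply (hg22d (u, y) (Set.mk_mem_prod hu hy))] at h
    exact h
  -- assemble
  refine ⟨h120, ?_⟩
  by_cases hne : (Set.Ioo umin umax).Nonempty ∧ (Set.Ioo vmin vmax).Nonempty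
  · obtain ⟨⟨us, hus⟩, ⟨vs, hvs⟩⟩ := hne
    refine ⟨fun u => g11 (u, vs) - g11 (us, vs), fun u => g22 (u, vs),
      fun w => g11 (us, w), fun w => g22 (us, w) - g22 (us, vs), ?_⟩
    intro u hu v hv
    constructor
    · have hk : ∀ w ∈ Set.Ioo vmin vmax,
          HasDerivWithinAt (fun w => g11 (u, w) - g11 (us, w)) 0 (Set.Ioo vmin vmax) w := by
        intro w hw
        have h1 := slice_hasDerivAt_snd hDo (hg11.of_le one_le_two) (Set.mk_mem_prod hu hw)
        have h2 := slice_hasDerivAt_snd hDo (hg11.of_le one_le_two) (Set.mk_mem_prod hus hw)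
        have h3 := h1.sub h2
        rw [const1 w hw u hu us hus, sub_self] at h3
        exact h3.hasDerivWithinAt
      have hb := (convex_Ioo vmin vmax).norm_image_sub_le_of_norm_hasDerivWithin_le
        (C := 0) (f' := fun _ => (0:ℝ)) hk (fun w _ => by simp) hvs hv
      rw [Real.norm_eq_abs, zero_mul] at hb
      have h0 := abs_eq_zero.mp (le_antisymm hb (abs_nonneg _))
      have : g11 (u, v) - g11 (us, v) - (g11 (u, vs) - g11 (us, vs)) = 0 := h0
      beta_reduce
      linarith
    · have hk : ∀ w ∈ Set.Ioo umin umax,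
          HasDerivWithinAt (fun w => g22 (w, v) - g22 (w, vs)) 0 (Set.Ioo umin umax) w := by
        intro w hw
        have h1 := slice_hasDerivAt_fst hDo (hg22.of_le one_le_two) (Set.mk_mem_prod hw hv)
        have h2 := slice_hasDerivAt_fst hDo (hg22.of_le one_le_two) (Set.mk_mem_prod hw hvs)
        have h3 := h1.sub h2
        rw [const2 w hw v hv vs hvs, sub_self] at h3
        exact h3.hasDerivWithinAt
      have hb := (convex_Ioo umin umax).norm_image_sub_le_of_norm_hasDerivWithin_le
        (C := 0) (f' := fun _ => (0:ℝ)) hk (fun w _ => by simp) hus hu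
      rw [Real.norm_eq_abs, zero_mul] at hb
      have h0 := abs_eq_zero.mp (le_antisymm hb (abs_nonneg _))
      have : g22 (u, v) - g22 (u, vs) - (g22 (us, v) - g22 (us, vs)) = 0 := h0
      beta_reduce
      linarith
  · exact ⟨0, 0, 0, 0, fun u hu v hv => (hne ⟨⟨u, hu⟩, ⟨v, hv⟩⟩).elim⟩
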